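/- Disjointness of jump witnesses: let y = RS(x, α, β) with 1 ≥ α > β ≥ 0, and suppose y has k indices t with y^t ≠ y^{t+1}. Then there exist k pairwise-disjoint (except possibly at endpoints, in the non-overlapping interior sense) time intervals [a_1,b_1],...,[a_k,b_k] with b_j ≤ a_{j+1}, such that for each j, |x^{b_j} − x^{a_j}| ≥ α − β. -/
import Mathlib


/- The two-threshold rounding scheme `RS`.  Given a time horizon `T`, a sequence
`x : ℕ → ℝ` (indices `0, …, T-1`) of values in `[0,1]` and thresholds `α ≥ β`,
it produces a `{0,1}`-valued sequence `y`:
* if `x t ≥ α` then `y t = 1`;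
* if `x t ≤ β` then `y t = 0`;
* on a maximal interval `[t₁,t₂]` with `β < x < α` throughout, `y = 1` iff both
  (`t₁ = 0` or `x (t₁-1) ≥ α`) and (`t₂ = T-1` or `x (t₂+1) ≥ α`);
  this is expressed below by saying that the nearest non-strict index on each
  side (within the horizon), when it exists, carries a value `≥ α`. -/
open Classical in
noncomputable def RS (T : ℕ) (x : ℕ → ℝ) (α β : ℝ) (t : ℕ) : ℝ :=
  if α ≤ x t then 1
  else if x t ≤ β then 0
  else if ((∀ s, s ≤ t → β < x s ∧ x s < α) ∨
           (∃ s, s < t ∧ α ≤ x s ∧ ∀ u, s < u → u ≤ t → β < x u ∧ x u < α)) ∧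
          ((∀ s, t ≤ s → s < T → β < x s ∧ x s < α) ∨
           (∃ s, t < s ∧ s < T ∧ α ≤ x s ∧ ∀ u, t ≤ u → u < s → β < x u ∧ x u < α))
  then 1 else 0

/-- Left condition of `RS` on a band point. -/
def Lc (x : ℕ → ℝ) (α β : ℝ) (t : ℕ) : Prop :=
  (∀ s, s ≤ t → β < x s ∧ x s < α) ∨
  (∃ s, s < t ∧ α ≤ x s ∧ ∀ u, s < u → u ≤ t → β < x u ∧ x u < α)

/-- Right condition of `RS` on a band point. -/
def Rc (T : ℕ) (x : ℕ → ℝ) (α β : ℝ) (t : ℕ) : Prop :=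
  (∀ s, t ≤ s → s < T → β < x s ∧ x s < α) ∨
  (∃ s, t < s ∧ s < T ∧ α ≤ x s ∧ ∀ u, t ≤ u → u < s → β < x u ∧ x u < α)

open Classical in
lemma RS_eq (T : ℕ) (x : ℕ → ℝ) (α β : ℝ) (t : ℕ) :
    RS T x α β t = if α ≤ x t then (1:ℝ) else if x t ≤ β then 0
      else if Lc x α β t ∧ Rc T x α β t then 1 else 0 := by
  unfold RS Lc Rc
  congr

section lemmas
variable {T : ℕ} {x : ℕ → ℝ} {α β : ℝ} {t : ℕ}

lemma rs_high (h : α ≤ x t) : RS T x α β t = 1 := by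
  rw [RS_eq, if_pos h]

lemma rs_low (hαβ : β < α) (h : x t ≤ β) : RS T x α β t = 0 := by
  rw [RS_eq, if_neg (by linarith), if_pos h]

open Classical in
lemma rs_band_eq (hb : β < x t ∧ x t < α) :
    RS T x α β t = if Lc x α β t ∧ Rc T x α β t then 1 else 0 := by
  rw [RS_eq, if_neg (by linarith [hb.2]), if_neg (by linarith [hb.1])]

/-- band–band : no jump. -/
lemma rs_band_band (hb : β < x t ∧ x t < α) (hb1 : β < x (t+1) ∧ x (t+1) < α) :
    RS T x α β t = RS T x α β (t+1) := by
  classical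
  rw [rs_band_eq hb, rs_band_eq hb1]
  refine if_congr ?_ rfl rfl
  constructor
  · rintro ⟨hl, hr⟩
    constructor
    · rcases hl with h | ⟨s, hst, hαs, hband⟩
      · refine Or.inl fun s hs => ?_
        rcases Nat.eq_or_lt_of_le hs with rfl | h'
        · exact hb1
        · exact h s (by omega)
      · refine Or.inr ⟨s, by omega, hαs, fun u hsu hut => ?_⟩
        rcases Nat.eq_or_lt_of_le hut with rfl | h'
        · exact hb1
        · exact hband u hsu (by omega)
    · rcases hr with h | ⟨s, hts, hsT, hαs, hband⟩
      · exact Or.inl fun s hs hsT => h s (by omega) hsT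
      · have hs1 : t + 1 < s := by
          rcases Nat.eq_or_lt_of_le hts with rfl | h'
          · exact absurd hαs (by linarith [hb1.2])
          · exact h'
        exact Or.inr ⟨s, hs1, hsT, hαs, fun u hu hus => hband u (by omega) hus⟩
  · rintro ⟨hl, hr⟩
    constructor
    · rcases hl with h | ⟨s, hst, hαs, hband⟩
      · exact Or.inl fun s hs => h s (by omega)
      · have hst' : s < t := by
          rcases Nat.lt_or_ge s t with h' | h'
          · exact h'
          · exfalso
            have : s = t := by omega
            subst this
            exact absurd hαs (by linarith [hb.2])
        exact Or.inr ⟨s, hst', hαs, fun u hsu hut => hband u hsu (by omega)⟩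
    · rcases hr with h | ⟨s, hts, hsT, hαs, hband⟩
      · refine Or.inl fun s hs hsT => ?_
        rcases Nat.eq_or_lt_of_le hs with rfl | h'
        · exact hb
        · exact h s (by omega) hsT
      · refine Or.inr ⟨s, by omega, hsT, hαs, fun u hu hus => ?_⟩
        rcases Nat.eq_or_lt_of_le hu with rfl | h'
        · exact hb
        · exact hband u (by omega) hus
end lemmas

section lemmas2
variable {T : ℕ} {x : ℕ → ℝ} {α β : ℝ} {t : ℕ}

/-- band–low : value 0 at the band point. -/
lemma rs_band_low (hαβ : β < α) (hb : β < x t ∧ x t < α) (hlow : x (t+1) ≤ β)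
    (ht : t + 1 < T) : RS T x α β t = 0 := by
  classical
  rw [rs_band_eq hb, if_neg]
  rintro ⟨-, hr⟩
  rcases hr with h | ⟨s, hts, hsT, hαs, hband⟩
  · have := h (t+1) (by omega) ht
    linarith [this.1]
  · rcases Nat.lt_or_ge (t+1) s with h' | h'
    · have := hband (t+1) (by omega) h'
      linarith [this.1]
    · have : s = t + 1 := by omega
      subst this
      linarith
  -- done

/-- low–band : value 0 at the band point. -/
lemma rs_low_band (hαβ : β < α) (hlow : x t ≤ β) (hb : β < x (t+1) ∧ x (t+1) < α) :
    RS T x α β (t+1) = 0 := by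
  classical
  rw [rs_band_eq hb, if_neg]
  rintro ⟨hl, -⟩
  rcases hl with h | ⟨s, hst, hαs, hband⟩
  · have := h t (by omega)
    linarith [this.1]
  · rcases Nat.lt_or_ge s t with h' | h'
    · have := hband t h' (by omega)
      linarith [this.1]
    · have : s = t := by omega
      subst this
      linarith

/-- The witness lemma: every jump of `RS` is witnessed by a pair of times
with structural properties. -/
lemma wit (hαβ : β < α) (ht : t + 1 < T)
    (hj : RS T x α β t ≠ RS T x α β (t+1)) :
    ∃ a b : ℕ, a ≤ t ∧ t < b ∧ b < T ∧
      (∀ u, a < u → u ≤ t → β < x u ∧ x u < α) ∧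
      (∀ u, t < u → u < b → β < x u ∧ x u < α) ∧
      ((x a ≤ β ∧ α ≤ x b) ∨ (α ≤ x a ∧ x b ≤ β)) ∧
      (b = t + 1 ∨ x b ≤ β) := by
  classical
  have tri : ∀ s : ℕ, x s ≤ β ∨ (β < x s ∧ x s < α) ∨ α ≤ x s := by
    intro s
    rcases le_or_gt (x s) β with h | h
    · exact Or.inl h
    rcases le_or_gt α (x s) with h' | h'
    · exact Or.inr (Or.inr h')
    · exact Or.inr (Or.inl ⟨h, h'⟩)
  rcases tri t with h0 | h0 | h0 <;> rcases tri (t+1) with h1 | h1 | h1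
  · exact absurd ((rs_low hαβ h0).trans (rs_low hαβ h1).symm) hj
  · exact absurd ((rs_low hαβ h0).trans (rs_low_band hαβ h0 h1).symm) hj
  · exact ⟨t, t+1, le_refl t, Nat.lt_succ_self t, ht,
      fun u hu hu' => absurd hu (by omega),
      fun u hu hu' => absurd hu (by omega),
      Or.inl ⟨h0, h1⟩, Or.inl rfl⟩
  · exact absurd ((rs_band_low hαβ h0 h1 ht).trans (rs_low hαβ h1).symm) hj
  · exact absurd (rs_band_band h0 h1) hj
  · -- band, high : nearest left non-band point is low
    have hr1 : RS T x α β (t+1) = 1 := rs_high h1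
    have hRc : Rc T x α β t := by
      refine Or.inr ⟨t+1, Nat.lt_succ_self t, ht, h1, fun u hu hu' => ?_⟩
      have : u = t := by omega
      subst this; exact h0
    have hnL : ¬ Lc x α β t := by
      intro hL
      exact hj (by rw [rs_band_eq h0, if_pos ⟨hL, hRc⟩, hr1])
    have hex : ¬ ∀ s, s ≤ t → β < x s ∧ x s < α := fun h => hnL (Or.inl h)
    push_neg at hex
    obtain ⟨s₀, hs₀t, hs₀⟩ := hex
    have hs₀' : ¬(β < x s₀ ∧ x s₀ < α) := by
      intro hc; rcases hs₀ hc.1 with h; linarith [hc.2]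
    set P : ℕ → Prop := fun s => ¬(β < x s ∧ x s < α) with hP
    set l := Nat.findGreatest P t with hl
    have hPl : P l := Nat.findGreatest_spec hs₀t hs₀'
    have hlt : l ≤ t := Nat.findGreatest_le t
    have hbandmid : ∀ u, l < u → u ≤ t → β < x u ∧ x u < α := by
      intro u hu1 hu2
      have := Nat.findGreatest_is_greatest hu1 hu2
      simpa [hP] using this
    have hlow : x l ≤ β := by
      rcases tri l with h | h | h
      · exact h
      · exact absurd h hPl
      · exfalso
        apply hnL
        have hlt' : l < t := lt_of_le_of_ne hlt (fun h => hPl (by rw [h]; exact h0))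
        exact Or.inr ⟨l, hlt', h, hbandmid⟩
    exact ⟨l, t+1, hlt, Nat.lt_succ_self t, ht, hbandmid,
      fun u hu hu' => absurd hu (by omega), Or.inl ⟨hlow, h1⟩, Or.inl rfl⟩
  · exact ⟨t, t+1, le_refl t, Nat.lt_succ_self t, ht,
      fun u hu hu' => absurd hu (by omega),
      fun u hu hu' => absurd hu (by omega),
      Or.inr ⟨h0, h1⟩, Or.inr h1⟩
  · -- high, band : nearest right non-band point is low
    have hr0 : RS T x α β t = 1 := rs_high h0
    have hLc : Lc x α β (t+1) := by
      refine Or.inr ⟨t, Nat.lt_succ_self t, h0, fun u hu hu' => ?_⟩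
      have : u = t + 1 := by omega
      subst this; exact h1
    have hnR : ¬ Rc T x α β (t+1) := by
      intro hR
      exact hj (by rw [hr0, rs_band_eq h1, if_pos ⟨hLc, hR⟩])
    have hex : ¬ ∀ s, t+1 ≤ s → s < T → β < x s ∧ x s < α := fun h => hnR (Or.inl h)
    push_neg at hex
    obtain ⟨s₀, hs₀1, hs₀T, hs₀⟩ := hex
    have hs₀' : ¬(β < x s₀ ∧ x s₀ < α) := by
      intro hc; rcases hs₀ hc.1 with h; linarith [hc.2]
    have hQ : ∃ s, t + 1 ≤ s ∧ s < T ∧ ¬(β < x s ∧ x s < α) := ⟨s₀, hs₀1, hs₀T, hs₀'⟩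
    set r := Nat.find hQ with hr
    obtain ⟨hr1, hrT, hrnb⟩ := Nat.find_spec hQ
    have hbandmid : ∀ u, t < u → u < r → β < x u ∧ x u < α := by
      intro u hu1 hu2
      by_contra hc
      exact Nat.find_min hQ hu2 ⟨by omega, by omega, hc⟩
    have htr : t + 1 < r := by
      rcases Nat.eq_or_lt_of_le hr1 with h' | h'
      · exact absurd h1 (h' ▸ hrnb)
      · exact h'
    have hlow : x r ≤ β := by
      rcases tri r with h | h | h
      · exact h
      · exact absurd h hrnb
      · exfalso
        apply hnR
        exact Or.inr ⟨r, htr, hrT, h, fun u hu hu' => hbandmid u (by omega) hu'⟩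
    exact ⟨t, r, le_refl t, by omega, hrT,
      fun u hu hu' => absurd hu (by omega), hbandmid, Or.inr ⟨h0, hlow⟩, Or.inr hlow⟩
  · exact absurd ((rs_high h0).trans (rs_high h1).symm) hj

/-- Ordering of witnesses: the witness interval for a jump at `t` ends before
the witness interval for any later jump at `t'` begins. -/
lemma order_wit (hαβ : β < α) {t t' b a' : ℕ}
    (htt' : t < t') (ht' : t' + 1 < T)
    (hj' : RS T x α β t' ≠ RS T x α β (t'+1))
    (hbT : b < T)
    (hband : ∀ u, t < u → u < b → β < x u ∧ x u < α)
    (hside : x b ≤ β ∨ α ≤ x b)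
    (hmark : b = t + 1 ∨ x b ≤ β)
    (ha' : a' ≤ t')
    (hband' : ∀ u, a' < u → u ≤ t' → β < x u ∧ x u < α) :
    b ≤ a' := by
  have hbt' : b ≤ t' := by
    rcases hmark with rfl | hlow
    · omega
    · by_contra hgt
      push_neg at hgt
      rcases Nat.lt_or_ge (t'+1) b with hc | hc
      · exact hj' (rs_band_band (hband t' htt' hgt) (hband (t'+1) (by omega) hc))
      · have hb' : b = t' + 1 := by omega
        apply hj'
        rw [rs_band_low hαβ (hband t' htt' hgt) (hb' ▸ hlow) ht',
          rs_low hαβ (hb' ▸ hlow)]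
  by_contra hcon
  push_neg at hcon
  have hbb := hband' b hcon hbt'
  rcases hside with h | h
  · linarith [hbb.1]
  · linarith [hbb.2]

end lemmas2

open Classical in
/-- disjointness of jump witnesses.  If `y = RS(x,α,β)` has `k`
jump indices, then there are `k` essentially disjoint time intervals
`[a₁,b₁], …, [a_k,b_k]` (with `b_j ≤ a_{j+1}`), inside the horizon, on each of
which `x` varies by at least `α - β`. -/
theorem stmt_18 (T : ℕ) (x : ℕ → ℝ) (α β : ℝ)
    (hx : ∀ t, t < T → 0 ≤ x t ∧ x t ≤ 1)
    (hα : α ≤ 1) (hαβ : β < α) (hβ : 0 ≤ β)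
    (k : ℕ)
    (hk : ((Finset.range (T - 1)).filter
      (fun t => RS T x α β t ≠ RS T x α β (t + 1))).card = k) :
    ∃ a b : ℕ → ℕ,
      (∀ j, j < k → a j ≤ b j ∧ b j < T ∧ α - β ≤ |x (b j) - x (a j)|) ∧
      (∀ j, j + 1 < k → b j ≤ a (j + 1)) := by
  classical
  have e := Finset.orderIsoOfFin _ hk
  have hjump : ∀ j : Fin k, ((e j : ℕ)) + 1 < T ∧
      RS T x α β (e j) ≠ RS T x α β ((e j) + 1) := by
    intro j
    have hm := (e j).2
    simp only [Finset.mem_filter, Finset.mem_range] at hm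
    exact ⟨by omega, hm.2⟩
  have H : ∀ j : Fin k, ∃ a b : ℕ, a ≤ (e j : ℕ) ∧ (e j : ℕ) < b ∧ b < T ∧
      (∀ u, a < u → u ≤ (e j : ℕ) → β < x u ∧ x u < α) ∧
      (∀ u, (e j : ℕ) < u → u < b → β < x u ∧ x u < α) ∧
      ((x a ≤ β ∧ α ≤ x b) ∨ (α ≤ x a ∧ x b ≤ β)) ∧
      (b = (e j : ℕ) + 1 ∨ x b ≤ β) :=
    fun j => wit hαβ (hjump j).1 (hjump j).2
  choose A B h1 h2 h3 h4 h5 h6 h7 using H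
  refine ⟨fun j => if h : j < k then A ⟨j, h⟩ else 0,
          fun j => if h : j < k then B ⟨j, h⟩ else 0, ?_, ?_⟩
  · intro j hj
    simp only [dif_pos hj]
    refine ⟨(h1 ⟨j, hj⟩).trans (h2 ⟨j, hj⟩).le, h3 ⟨j, hj⟩, ?_⟩
    rcases h6 ⟨j, hj⟩ with ⟨ha, hb⟩ | ⟨ha, hb⟩
    · rw [abs_of_nonneg (by linarith)]; linarith
    · rw [abs_of_nonpos (by linarith)]; linarith
  · intro j hj
    have hj' : j < k := by omega
    simp only [dif_pos hj, dif_pos hj']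
    have hlt : (e ⟨j, hj'⟩ : ℕ) < (e ⟨j+1, hj⟩ : ℕ) := by
      have := e.strictMono (show (⟨j, hj'⟩ : Fin k) < ⟨j+1, hj⟩ from by
        simp [Fin.mk_lt_mk])
      exact this
    refine order_wit hαβ hlt (hjump ⟨j+1, hj⟩).1 (hjump ⟨j+1, hj⟩).2
      (h3 ⟨j, hj'⟩) (h5 ⟨j, hj'⟩) ?_ (h7 ⟨j, hj'⟩) (h1 ⟨j+1, hj⟩) (h4 ⟨j+1, hj⟩)
    rcases h6 ⟨j, hj'⟩ with ⟨-, hb⟩ | ⟨-, hb⟩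
    · exact Or.inr hb
    · exact Or.inl hb
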